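/- Let B be a C*-algebra, x, y, q ∈ B positive contractions with q a projection, and suppose ‖x y x − q‖ < 1/8. Then the hereditary C*-subalgebra generated by y (the closure of yBy) contains a projection which is Murray–von Neumann equivalent to q. -/

import Mathlib

open Filter Topology

namespace Stmt7Aux



noncomputable def ff (t : ℝ) : ℝ := min 1 (max 0 ((3/2) * (t - 1/6)))

lemma ff_cont : Continuous ff := continuous_const.min (continuous_const.max (by continuity))

@[simp] lemma ff_zero : ff 0 = 0 := by norm_num [ff]

lemma ff_nonneg(t : ℝ) : 0 ≤ ff t := le_min zero_le_one (le_max_left _ _)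

lemma ff_eq_zero {t : ℝ} (h : t ≤ 1/6) : ff t = 0 := by
  have : (3/2) * (t - 1/6) ≤ 0 := by nlinarith
  rw [ff, max_eq_left this, min_eq_right zero_le_one]

lemma ff_eq_one {t : ℝ} (h : 5/6 ≤ t) : ff t = 1 := by
  have h1 : (1:ℝ) ≤ (3/2) * (t - 1/6) := by nlinarith
  have : max 0 ((3/2) * (t - 1/6)) = (3/2) * (t - 1/6) := max_eq_right (by linarith)
  rw [ff, this, min_eq_left h1]

lemma ff_le_one (t : ℝ) : ff t ≤ 1 := min_le_left _ _

noncomputable def hh (t : ℝ) : ℝ := Real.sqrt (ff t / max t (1/6))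

lemma max_pos (t : ℝ) : (0:ℝ) < max t (1/6) := lt_max_of_lt_right (by norm_num)

lemma hh_cont : Continuous hh := by
  apply Real.continuous_sqrt.comp
  exact (ff_cont.div (continuous_id.max continuous_const) (fun t => (max_pos t).ne'))

@[simp] lemma hh_zero : hh 0 = 0 := by simp [hh]

lemma hh_eq_zero {t : ℝ} (h : t ≤ 1/6) : hh t = 0 := by simp [hh, ff_eq_zero h]

lemma hh_sq_mul {t : ℝ} (h : 5/6 ≤ t) : hh t * hh t * t = ff t := by
  have ht : max t (1/6) = t := max_eq_left (by linarith)
  have h0 : (0:ℝ) < t := by linarith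
  rw [hh, ht, Real.mul_self_sqrt (div_nonneg (ff_nonneg t) h0.le), div_mul_cancel₀ _ h0.ne']





lemma gap {B : Type*} [NonUnitalCStarAlgebra B] [PartialOrder B] [StarOrderedRing B]
    {c q : B} (hq1 : ‖q‖ ≤ 1) (hqsa : IsSelfAdjoint q) (hq2 : q * q = q)
    (hnear : ‖c - q‖ < 1/8) :
    ∀ t ∈ quasispectrum ℝ c, t ≤ 1/6 ∨ 5/6 ≤ t := by
  intro t ht
  by_contra hcon
  push_neg at hcon
  obtain ⟨h16, h56⟩ := hcon
  rw [Unitization.quasispectrum_eq_spectrum_inr' ℝ ℂ c] at ht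
  set A := Unitization ℂ B with hA
  set Q : A := (q : A) with hQ
  set C : A := (c : A) with hC
  have hQ2 : Q * Q = Q := by rw [hQ, ← Unitization.inr_mul, hq2]
  have ht0 : t ≠ 0 := by linarith
  have ht1 : t - 1 ≠ 0 := by intro h; rw [sub_eq_zero] at h; linarith
  set R0 : A := t⁻¹ • ((1:A) - Q) + (t-1)⁻¹ • Q with hR0
  have h1 : t * t⁻¹ = 1 := mul_inv_cancel₀ ht0
  have h2 : (t-1) * (t-1)⁻¹ = 1 := mul_inv_cancel₀ ht1
  have key1 : (t • (1:A) - Q) * R0 = 1 := by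
    rw [hR0]
    simp only [mul_add, sub_mul, mul_sub, smul_mul_assoc, mul_smul_comm, smul_smul,
      one_mul, mul_one, hQ2]
    rw [smul_sub]
    match_scalars <;> field_simp <;> ring
  have key2 : R0 * (t • (1:A) - Q) = 1 := by
    rw [hR0]
    simp only [mul_add, add_mul, sub_mul, mul_sub, smul_mul_assoc, mul_smul_comm, smul_smul,
      one_mul, mul_one, hQ2]
    rw [smul_sub]
    match_scalars <;> field_simp <;> ring
  have hTQ : IsUnit (t • (1:A) - Q) := ⟨⟨_, R0, key1, key2⟩, rfl⟩
  have hsaQ : star Q = Q := by rw [hQ, ← Unitization.inr_star, hqsa.star_eq]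
  have hnormE : ‖(1:A) - Q‖ ≤ 1 := by
    have hsa : star ((1:A) - Q) = (1:A) - Q := by rw [star_sub, star_one, hsaQ]
    have hidem : ((1:A) - Q) * ((1:A) - Q) = (1:A) - Q := by
      simp only [mul_sub, sub_mul, one_mul, mul_one, hQ2]; abel
    have h3 := CStarRing.norm_star_mul_self (x := (1:A) - Q)
    rw [hsa, hidem] at h3
    nlinarith [norm_nonneg ((1:A) - Q)]
  have hQn : ‖Q‖ ≤ 1 := by rw [hQ, Unitization.norm_inr]; exact hq1
  have hR0n : ‖R0‖ ≤ t⁻¹ + (1-t)⁻¹ := by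
    have e1 : ‖t⁻¹ • ((1:A) - Q)‖ ≤ t⁻¹ := by
      rw [norm_smul, Real.norm_eq_abs, abs_of_pos (inv_pos.mpr (by linarith))]
      calc t⁻¹ * ‖(1:A) - Q‖ ≤ t⁻¹ * 1 := by
            exact mul_le_mul_of_nonneg_left hnormE (inv_nonneg.mpr (by linarith))
        _ = t⁻¹ := mul_one _
    have e2 : ‖(t-1)⁻¹ • Q‖ ≤ (1-t)⁻¹ := by
      rw [norm_smul, Real.norm_eq_abs, abs_inv, abs_of_neg (by linarith), neg_sub]
      calc (1-t)⁻¹ * ‖Q‖ ≤ (1-t)⁻¹ * 1 := by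
            exact mul_le_mul_of_nonneg_left hQn (inv_nonneg.mpr (by linarith))
        _ = (1-t)⁻¹ := mul_one _
    calc ‖R0‖ ≤ ‖t⁻¹ • ((1:A) - Q)‖ + ‖(t-1)⁻¹ • Q‖ := norm_add_le _ _
      _ ≤ t⁻¹ + (1-t)⁻¹ := add_le_add e1 e2
  have hCQ : ‖C - Q‖ < 1/8 := by
    rw [hC, hQ, ← Unitization.inr_sub, Unitization.norm_inr]; exact hnear
  have hsum : t⁻¹ + (1-t)⁻¹ < 8 := by
    have htpos : (0:ℝ) < t := by linarith
    have h1t : (0:ℝ) < 1 - t := by linarith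
    rw [inv_add_inv htpos.ne' h1t.ne', div_lt_iff₀ (by positivity)]
    nlinarith
  have hsmall : ‖R0 * (C - Q)‖ < 1 := by
    calc ‖R0 * (C - Q)‖ ≤ ‖R0‖ * ‖C - Q‖ := norm_mul_le _ _
      _ ≤ (t⁻¹ + (1-t)⁻¹) * ‖C - Q‖ := by
          exact mul_le_mul_of_nonneg_right hR0n (norm_nonneg _)
      _ < 8 * (1/8) := by
          apply mul_lt_mul'' hsum hCQ (by have : (0:ℝ) ≤ t⁻¹ := inv_nonneg.mpr (by linarith); have : (0:ℝ) ≤ (1-t)⁻¹ := inv_nonneg.mpr (by linarith); linarith) (norm_nonneg _)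
      _ = 1 := by norm_num
  have hfact : t • (1:A) - C = (t • (1:A) - Q) * (1 - R0 * (C - Q)) := by
    rw [mul_sub, mul_one, ← mul_assoc, key1, one_mul]; abel
  have hu : IsUnit (algebraMap ℝ A t - C) := by
    rw [Algebra.algebraMap_eq_smul_one, hfact]
    exact hTQ.mul (Units.oneSub _ hsmall).isUnit
  exact spectrum.mem_iff.mp ht hu





noncomputable def gg (n : ℕ) (t : ℝ) : ℝ := Real.sqrt t * (|t| + (1:ℝ)/(n+1))⁻¹

lemma gg_cont (n : ℕ) : Continuous (gg n) := by
  apply Real.continuous_sqrt.mul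
  apply Continuous.inv₀ (continuous_abs.add continuous_const)
  intro t
  exact (by positivity : (0:ℝ) < |t| + (1:ℝ)/(n+1)).ne'

@[simp] lemma gg_zero (n : ℕ) : gg n 0 = 0 := by simp [gg]

lemma key_bound (n : ℕ) {x : ℝ} (hx : 0 ≤ x) :
    |x * gg n x - Real.sqrt x| ≤ Real.sqrt (1/(n+1)) := by
  set d : ℝ := 1/(n+1) with hd
  have hd0 : (0:ℝ) < d := by positivity
  have habs : |x| = x := abs_of_nonneg hx
  have hxd : (0:ℝ) < x + d := by linarith
  have : x * gg n x - Real.sqrt x = -(Real.sqrt x * (d * (x + d)⁻¹)) := by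
    rw [gg, habs, ← hd]
    field_simp
    ring
  have h1 : Real.sqrt x * (d * (x + d)⁻¹) = Real.sqrt x * d / (x + d) := by
    field_simp
  rw [this, abs_neg, abs_of_nonneg (by positivity), h1, div_le_iff₀ hxd]
  nlinarith [Real.sq_sqrt hx, Real.sq_sqrt hd0.le, Real.sqrt_nonneg x, Real.sqrt_nonneg d,
    mul_nonneg (Real.sqrt_nonneg d) (sq_nonneg (Real.sqrt x - Real.sqrt d)),
    mul_nonneg (mul_nonneg (Real.sqrt_nonneg x) (Real.sqrt_nonneg d)) (Real.sqrt_nonneg d)]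

lemma sqrt_conj_mem_closure {B : Type*} [NonUnitalCStarAlgebra B] [PartialOrder B]
    [StarOrderedRing B] {y : B} (hy : 0 ≤ y) (b : B) :
    cfcₙ Real.sqrt y * b * cfcₙ Real.sqrt y ∈
      closure {z : B | ∃ b' : B, z = y * b' * y} := by
  have hysa : IsSelfAdjoint y := .of_nonneg hy
  set s : B := cfcₙ Real.sqrt y with hs
  set e : ℕ → B := fun n => cfcₙ (gg n) y with he
  have hmul : ∀ n : ℕ, y * e n = cfcₙ (fun t => t * gg n t) y := by
    intro n
    have h0 := cfcₙ_mul (fun t : ℝ => t) (gg n) y (by fun_prop) (by simp)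
      ((gg_cont n).continuousOn) (gg_zero n)
    rw [cfcₙ_id' ℝ y] at h0
    exact h0.symm
  have hmul' : ∀ n : ℕ, e n * y = cfcₙ (fun t => t * gg n t) y := by
    intro n
    have h0 := cfcₙ_mul (gg n) (fun t : ℝ => t) y ((gg_cont n).continuousOn) (gg_zero n)
      (by fun_prop) (by simp)
    rw [cfcₙ_id' ℝ y] at h0
    rw [← h0]
    exact (cfcₙ_congr fun x _ => mul_comm _ _).symm
  have hnorm : ∀ n : ℕ, ‖y * e n - s‖ ≤ Real.sqrt (1/(n+1)) := by
    intro n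
    rw [hmul n, hs, ← cfcₙ_sub (fun t => t * gg n t) Real.sqrt y
      ((continuous_id.mul (gg_cont n)).continuousOn) (by simp)
      Real.continuous_sqrt.continuousOn (by simp)]
    apply norm_cfcₙ_le
    intro x hx
    rw [Real.norm_eq_abs]
    exact key_bound n (quasispectrum_nonneg_of_nonneg y hy x hx)
  have hbnd : Filter.Tendsto (fun n : ℕ => Real.sqrt (1/(n+1))) atTop (𝓝 0) := by
    have h0 : Filter.Tendsto (fun n : ℕ => 1/((n:ℝ)+1)) atTop (𝓝 0) :=
      tendsto_one_div_add_atTop_nhds_zero_nat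
    have h1 := (Real.continuous_sqrt.tendsto 0).comp h0
    rw [Real.sqrt_zero] at h1
    exact h1
  have hconv : Filter.Tendsto (fun n : ℕ => y * e n) atTop (𝓝 s) := by
    rw [tendsto_iff_norm_sub_tendsto_zero]
    exact squeeze_zero (fun n => norm_nonneg _) hnorm hbnd
  have hconv' : Filter.Tendsto (fun n : ℕ => e n * y) atTop (𝓝 s) := by
    have : (fun n : ℕ => e n * y) = fun n : ℕ => y * e n := by
      ext n; rw [hmul n, hmul' n]
    rw [this]; exact hconv
  have htt : Filter.Tendsto (fun n : ℕ => y * (e n * b * e n) * y) atTop (𝓝 (s * b * s)) := by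
    have heq : (fun n : ℕ => y * (e n * b * e n) * y)
        = fun n : ℕ => (y * e n) * b * (e n * y) := by
      ext n; simp only [mul_assoc]
    rw [heq]
    exact (hconv.mul tendsto_const_nhds).mul hconv'
  exact mem_closure_of_tendsto htt (Filter.Eventually.of_forall fun n => ⟨e n * b * e n, rfl⟩)


end Stmt7Aux

set_option maxHeartbeats 2000000 in
/-- Perturbation lemma: if `x, y, q` are positive contractions with `q` a
projection and `‖xyx − q‖ < 1/8`, then the hereditary subalgebra generated by
`y` (the closure of `yBy`) contains a projection Murray–von Neumann equivalent
to `q`. -/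
theorem stmt7 {B : Type*} [NonUnitalCStarAlgebra B] [PartialOrder B]
    [StarOrderedRing B]
    (x y q : B) (hx : 0 ≤ x) (hx1 : ‖x‖ ≤ 1) (hy : 0 ≤ y) (hy1 : ‖y‖ ≤ 1)
    (hq : 0 ≤ q) (hq1 : ‖q‖ ≤ 1)
    (hqproj : IsSelfAdjoint q ∧ q * q = q)
    (hnear : ‖x * y * x - q‖ < 1/8) :
    ∃ p ∈ closure {z : B | ∃ b : B, z = y * b * y},
      (IsSelfAdjoint p ∧ p * p = p) ∧
        ∃ v : B, star v * v = p ∧ v * star v = q := by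
  obtain ⟨hqsa, hq2⟩ := hqproj
  have hxsa : IsSelfAdjoint x := .of_nonneg hx
  have hysa : IsSelfAdjoint y := .of_nonneg hy
  set s : B := cfcₙ Real.sqrt y with hs
  have hssa : IsSelfAdjoint s := cfcₙ_predicate _ _
  have hss : s * s = y := by
    rw [hs, ← cfcₙ_mul Real.sqrt Real.sqrt y Real.continuous_sqrt.continuousOn (by simp)
      Real.continuous_sqrt.continuousOn (by simp)]
    have h0 : cfcₙ (fun t => Real.sqrt t * Real.sqrt t) y = cfcₙ (id : ℝ → ℝ) y :=
      cfcₙ_congr fun t ht => by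
        rw [Real.mul_self_sqrt (quasispectrum_nonneg_of_nonneg y hy t ht)]; rfl
    rw [h0, cfcₙ_id ℝ y]
  set w : B := s * x * q with hw
  have hwstar : star w = q * x * s := by
    simp only [hw, star_mul, hqsa.star_eq, hxsa.star_eq, hssa.star_eq, mul_assoc]
  set c : B := star w * w with hc
  have hc_eq : c = q * (x * y * x) * q := by
    rw [hc, hwstar, hw]
    have h1 : q * x * s * (s * x * q) = q * x * (s * s) * (x * q) := by noncomm_ring
    rw [h1, hss]
    noncomm_ring
  have hcqnorm : ‖c - q‖ < 1/8 := by
    have hq3 : q * q * q = q := by rw [hq2, hq2]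
    have h1 : c - q = q * (x * y * x - q) * q := by
      calc c - q = q * (x * y * x) * q - q * q * q := by rw [hc_eq, hq3]
        _ = q * (x * y * x - q) * q := by noncomm_ring
    calc ‖c - q‖ = ‖q * (x * y * x - q) * q‖ := by rw [h1]
      _ ≤ ‖q * (x * y * x - q)‖ * ‖q‖ := norm_mul_le _ _
      _ ≤ ‖q‖ * ‖x * y * x - q‖ * ‖q‖ :=
          mul_le_mul_of_nonneg_right (norm_mul_le _ _) (norm_nonneg _)
      _ ≤ 1 * ‖x * y * x - q‖ * 1 := by
          apply mul_le_mul (mul_le_mul_of_nonneg_right hq1 (norm_nonneg _)) hq1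
            (norm_nonneg _) (by positivity)
      _ = ‖x * y * x - q‖ := by ring
      _ < 1/8 := hnear
  have hcpos : 0 ≤ c := star_mul_self_nonneg w
  have hcsa : IsSelfAdjoint c := .of_nonneg hcpos
  have hspec : ∀ t ∈ quasispectrum ℝ c, t ≤ 1/6 ∨ 5/6 ≤ t :=
    Stmt7Aux.gap hq1 hqsa hq2 hcqnorm
  have hspec0 : ∀ t ∈ quasispectrum ℝ c, 0 ≤ t := quasispectrum_nonneg_of_nonneg c hcpos
  have hcnorm : ‖c‖ ≤ 9/8 := by
    calc ‖c‖ = ‖(c - q) + q‖ := by rw [sub_add_cancel]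
      _ ≤ ‖c - q‖ + ‖q‖ := norm_add_le _ _
      _ ≤ 9/8 := by linarith [hcqnorm.le]
  have hspecub : ∀ t ∈ quasispectrum ℝ c, t ≤ 9/8 := by
    intro t ht
    rw [Unitization.quasispectrum_eq_spectrum_inr' ℝ ℂ c] at ht
    have h1 : ‖t‖ ≤ ‖(c : Unitization ℂ B)‖ := spectrum.norm_le_norm_of_mem ht
    rw [Unitization.norm_inr, Real.norm_eq_abs] at h1
    calc t ≤ |t| := le_abs_self t
      _ ≤ ‖c‖ := h1
      _ ≤ 9/8 := hcnorm
  -- absorption lemma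
  have hqc : q * c = c := by
    have h1 : q * c = q * q * (x * y * x) * q := by rw [hc_eq]; noncomm_ring
    rw [h1, hq2, ← hc_eq]
  have hcq' : c * q = c := by
    have h1 : c * q = q * (x * y * x) * (q * q) := by rw [hc_eq]; noncomm_ring
    rw [h1, hq2, ← hc_eq]
  have habsorb : ∀ φ : ℝ → ℝ, Continuous φ → (∀ t ≤ (1/6:ℝ), φ t = 0) →
      q * cfcₙ φ c = cfcₙ φ c ∧ cfcₙ φ c * q = cfcₙ φ c := by
    intro φ hφc hφ0
    set ψ : ℝ → ℝ := fun t => φ t / max t (1/6) with hψ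
    have hψc : Continuous ψ :=
      hφc.div (continuous_id.max continuous_const) (fun t => (Stmt7Aux.max_pos t).ne')
    have hψ0 : ψ 0 = 0 := by simp [hψ, hφ0 0 (by norm_num)]
    have hkey : cfcₙ φ c = cfcₙ (fun t => t * ψ t) c := by
      apply cfcₙ_congr
      intro t ht
      rcases hspec t ht with h | h
      · rw [hφ0 t h]
        simp only [hψ, hφ0 t h, zero_div, mul_zero]
      · have hmax : max t (1/6) = t := max_eq_left (by linarith)
        have ht0 : (t:ℝ) ≠ 0 := by linarith
        simp only [hψ]
        rw [hmax]
        field_simp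
        try ring
    have hL : cfcₙ φ c = c * cfcₙ ψ c := by
      rw [hkey, cfcₙ_mul (fun t : ℝ => t) ψ c (by fun_prop) (by simp)
        hψc.continuousOn hψ0, cfcₙ_id' ℝ c]
    have hR : cfcₙ φ c = cfcₙ ψ c * c := by
      have h0 := cfcₙ_mul ψ (fun t : ℝ => t) c hψc.continuousOn hψ0 (by fun_prop) (by simp)
      rw [cfcₙ_id' ℝ c] at h0
      rw [hkey, ← h0]
      exact cfcₙ_congr fun t _ => mul_comm _ _
    constructor
    · rw [hL, ← mul_assoc, hqc]
    · rw [hR, mul_assoc, hcq']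
  have hffabs := habsorb Stmt7Aux.ff Stmt7Aux.ff_cont (fun t ht => Stmt7Aux.ff_eq_zero ht)
  set fc : B := cfcₙ Stmt7Aux.ff c with hfc
  have hfc_idem : fc * fc = fc := by
    rw [hfc, ← cfcₙ_mul Stmt7Aux.ff Stmt7Aux.ff c Stmt7Aux.ff_cont.continuousOn (by simp)
      Stmt7Aux.ff_cont.continuousOn (by simp)]
    apply cfcₙ_congr
    intro t ht
    show Stmt7Aux.ff t * Stmt7Aux.ff t = Stmt7Aux.ff t
    rcases hspec t ht with h | h
    · rw [Stmt7Aux.ff_eq_zero h]; ring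
    · rw [Stmt7Aux.ff_eq_one h]; ring
  have hfcsa : IsSelfAdjoint fc := cfcₙ_predicate _ _
  have hcfcdiff : ‖c - fc‖ ≤ 1/6 := by
    have h0 := cfcₙ_sub (fun t : ℝ => t) Stmt7Aux.ff c (by fun_prop) (by simp)
      Stmt7Aux.ff_cont.continuousOn (by simp)
    rw [cfcₙ_id' ℝ c] at h0
    rw [hfc, ← h0]
    apply norm_cfcₙ_le
    intro t ht
    show ‖t - Stmt7Aux.ff t‖ ≤ 1/6
    rw [Real.norm_eq_abs, abs_le]
    rcases hspec t ht with h | h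
    · rw [Stmt7Aux.ff_eq_zero h]
      exact ⟨by linarith [hspec0 t ht], by linarith⟩
    · rw [Stmt7Aux.ff_eq_one h]
      exact ⟨by linarith, by linarith [hspecub t ht]⟩
  have hfcq : fc = q := by
    set e : B := q - fc with heq
    have hesa : star e = e := by rw [heq, star_sub, hqsa.star_eq, hfcsa.star_eq]
    have heidem : e * e = e := by
      rw [heq]
      calc (q - fc) * (q - fc) = q * q - q * fc - fc * q + fc * fc := by noncomm_ring
        _ = q - fc := by rw [hq2, hffabs.1, hffabs.2, hfc_idem]; abel
    have hdecomp : e = (q - c) + (c - fc) := by rw [heq]; abel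
    have henorm : ‖e‖ < 1 := by
      have h6 : ‖q - c‖ = ‖c - q‖ := norm_sub_rev _ _
      calc ‖e‖ ≤ ‖q - c‖ + ‖c - fc‖ := by rw [hdecomp]; exact norm_add_le _ _
        _ < 1 := by rw [h6]; linarith
    have h5 := CStarRing.norm_star_mul_self (x := e)
    rw [hesa, heidem] at h5
    have h7 : ‖e‖ = 0 := by nlinarith [norm_nonneg e]
    have he0 : e = 0 := norm_eq_zero.mp h7
    rw [heq] at he0
    have := sub_eq_zero.mp he0
    exact this.symm
  have hhhabs := habsorb Stmt7Aux.hh Stmt7Aux.hh_cont (fun t ht => Stmt7Aux.hh_eq_zero ht)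
  set hcB : B := cfcₙ Stmt7Aux.hh c with hhcB
  have hhcsa : IsSelfAdjoint hcB := cfcₙ_predicate _ _
  set u : B := hcB * star w with hu
  have hustar : star u = w * hcB := by rw [hu, star_mul, star_star, hhcsa.star_eq]
  have huus : u * star u = q := by
    rw [hu, hustar]
    have h1 : hcB * star w * (w * hcB) = hcB * c * hcB := by rw [hc]; noncomm_ring
    rw [h1]
    have h2 : hcB * c = cfcₙ (fun t => Stmt7Aux.hh t * t) c := by
      rw [hhcB, cfcₙ_mul Stmt7Aux.hh (fun t : ℝ => t) c Stmt7Aux.hh_cont.continuousOn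
        (by simp) (by fun_prop) (by simp), cfcₙ_id' ℝ c]
    rw [h2]
    have h3 : cfcₙ (fun t => Stmt7Aux.hh t * t) c * hcB
        = cfcₙ (fun t => Stmt7Aux.hh t * t * Stmt7Aux.hh t) c := by
      rw [hhcB, ← cfcₙ_mul (fun t => Stmt7Aux.hh t * t) Stmt7Aux.hh c
        ((Stmt7Aux.hh_cont.mul continuous_id).continuousOn) (by simp)
        Stmt7Aux.hh_cont.continuousOn (by simp)]
    rw [h3, ← hfcq, hfc]
    apply cfcₙ_congr
    intro t ht
    show Stmt7Aux.hh t * t * Stmt7Aux.hh t = Stmt7Aux.ff t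
    rcases hspec t ht with h | h
    · rw [Stmt7Aux.hh_eq_zero h, Stmt7Aux.ff_eq_zero h]; ring
    · rw [← Stmt7Aux.hh_sq_mul h]; ring
  set p : B := star u * u with hp
  have hpsa : IsSelfAdjoint p := by
    have : star (star u * u) = star u * u := by rw [star_mul, star_star]
    rw [hp]; exact this
  have hqu : q * u = u := by rw [hu, ← mul_assoc, hhhabs.1]
  have hpidem : p * p = p := by
    rw [hp]
    calc star u * u * (star u * u) = star u * (u * star u) * u := by noncomm_ring
      _ = star u * (q * u) := by rw [huus]; noncomm_ring
      _ = star u * u := by rw [hqu]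
  have hpmem : p ∈ closure {z : B | ∃ b : B, z = y * b * y} := by
    have h1 : p = s * (x * q * (hcB * hcB) * q * x) * s := by
      rw [hp, hustar, hu, hwstar, hw]
      noncomm_ring
    rw [h1, hs]
    exact Stmt7Aux.sqrt_conj_mem_closure hy _
  exact ⟨p, hpmem, ⟨hpsa, hpidem⟩, u, hp.symm, huus⟩
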